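/- arXiv:1303.3699 — 2 statements merged into one kernel-verified Lean document; each statement's English description precedes it below -/
import Mathlib

section
/- Symmetry is preserved under tensor product of formal Fourier-Jacobi series: suppose f = ∑ φ_m q'^m and g = ∑ ψ_m q'^m are formal series whose coefficients have Fourier expansions φ_m = ∑_{n,r} c(φ_m;n,r) q^n ζ^r with values in V_ρ resp. V_σ, satisfying the symmetry relations c(φ_m;n,r) = i^{2k} ρ(δ) c(φ_n;m,r) and c(ψ_m;n,r) = i^{2k₁} σ(δ) c(ψ_n;m,r). Then the Cauchy product f⊗g = ∑_M (∑_{m+m₁=M} φ_m ⊗ ψ_{m₁}) q'^M has coefficients whose Fourier coefficients satisfy c((f⊗g)_M; n, r) = i^{2(k+k₁)} (ρ⊗σ)(δ) c((f⊗g)_n; M, r). -/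
open TensorProduct

noncomputable section

/-- Symmetry is preserved under tensor products of formal Fourier-Jacobi series.
Jacobi forms are modeled abstractly through their Fourier coefficients
`c(φ_m; n, r) ∈ V_ρ` (respectively `c(ψ_m; n, r) ∈ V_σ`), with `m, n ∈ ℕ` and `r ∈ ℚ`
of finite support; `i^{2k}` is encoded as `I ^ twok` with `twok = 2k ∈ ℤ`, and `ρ(δ)`,
`σ(δ)` as linear endomorphisms `A`, `B`. If both series satisfy the symmetry relation
`c(φ_m;n,r) = i^{2k} ρ(δ) c(φ_n;m,r)`, then so does their Cauchy tensor product, with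
weight `k + k₁` and operator `(ρ ⊗ σ)(δ) = A ⊗ B`. -/
theorem statement7 {V W : Type*} [AddCommGroup V] [Module ℂ V] [AddCommGroup W] [Module ℂ W]
    [FiniteDimensional ℂ V] [FiniteDimensional ℂ W]
    (twok twok₁ : ℤ) (A : V →ₗ[ℂ] V) (B : W →ₗ[ℂ] W)
    (c : ℕ → ℕ → ℚ → V) (c' : ℕ → ℕ → ℚ → W)
    (hfin : ∀ m n, (Function.support (c m n)).Finite)
    (hfin' : ∀ m n, (Function.support (c' m n)).Finite)
    (hsym : ∀ m n r, c m n r = (Complex.I ^ twok) • A (c n m r))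
    (hsym' : ∀ m n r, c' m n r = (Complex.I ^ twok₁) • B (c' n m r)) :
    ∀ (M n : ℕ) (r : ℚ),
      (∑ p ∈ Finset.HasAntidiagonal.antidiagonal M, ∑ q ∈ Finset.HasAntidiagonal.antidiagonal n,
        ∑ᶠ (s : ℚ × ℚ) (_ : s.1 + s.2 = r), c p.1 q.1 s.1 ⊗ₜ[ℂ] c' p.2 q.2 s.2) =
      (Complex.I ^ (twok + twok₁)) •
        (TensorProduct.map A B)
          (∑ p ∈ Finset.HasAntidiagonal.antidiagonal n, ∑ q ∈ Finset.HasAntidiagonal.antidiagonal M,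
            ∑ᶠ (s : ℚ × ℚ) (_ : s.1 + s.2 = r), c p.1 q.1 s.1 ⊗ₜ[ℂ] c' p.2 q.2 s.2) := by
    classical
  intro M n r
  rw [map_sum, Finset.smul_sum, Finset.sum_comm]
  refine Finset.sum_congr rfl fun p hp => ?_
  rw [map_sum, Finset.smul_sum]
  refine Finset.sum_congr rfl fun q hq => ?_
  have hsupp : (Function.support fun s : ℚ × ℚ =>
      ∑ᶠ (_ : s.1 + s.2 = r), c p.1 q.1 s.1 ⊗ₜ[ℂ] c' p.2 q.2 s.2).Finite := by
    apply Set.Finite.subset ((hfin p.1 q.1).prod (hfin' p.2 q.2))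
    intro s hs
    simp only [Function.mem_support] at hs
    refine ⟨fun h0 => hs ?_, fun h0 => hs ?_⟩ <;> simp [h0]
  have hmap : (TensorProduct.map A B)
      (∑ᶠ (s : ℚ × ℚ) (_ : s.1 + s.2 = r), c p.1 q.1 s.1 ⊗ₜ[ℂ] c' p.2 q.2 s.2) =
      ∑ᶠ (s : ℚ × ℚ), (TensorProduct.map A B)
        (∑ᶠ (_ : s.1 + s.2 = r), c p.1 q.1 s.1 ⊗ₜ[ℂ] c' p.2 q.2 s.2) :=
    (TensorProduct.map A B).toAddMonoidHom.map_finsum hsupp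
  rw [hmap, smul_finsum]
  refine finsum_congr fun s => ?_
  rw [finsum_eq_if]
  conv_rhs => rw [finsum_eq_if]
  split_ifs with h
  · rw [map_tmul, hsym q.1 p.1 s.1, hsym' q.2 p.2 s.2, TensorProduct.tmul_smul,
      ← TensorProduct.smul_tmul', smul_smul, ← zpow_add₀ Complex.I_ne_zero,
      add_comm twok₁ twok]
  · simp
end
end

section
/- Symmetry is preserved under the Hom-pairing of formal Fourier-Jacobi series: if f = ∑ φ_m q'^m has V_ρ-valued coefficients with Fourier coefficients satisfying c(φ_m;n,r) = i^{2k} ρ(δ) c(φ_n;m,r), and g = ∑ ψ_m q'^m has Hom(V_ρ,V_σ)-valued coefficients with c(ψ_m;n,r) = i^{2k₁} τ(δ) c(ψ_n;m,r) (where τ(δ)(λ) = σ(δ) ∘ λ ∘ ρ(δ)⁻¹), then the series ⟨g,f⟩ = ∑_M ∑_{m+m₁=M} ⟨ψ_{m₁}, φ_m⟩ q'^M has Fourier coefficients satisfying c(⟨g,f⟩_M; n, r) = i^{2(k+k₁)} σ(δ) c(⟨g,f⟩_n; M, r). -/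
noncomputable section

/-- Symmetry is preserved under the Hom-pairing of formal Fourier-Jacobi series.
Coefficients are modeled abstractly: `cf m n r ∈ V_ρ` are the Fourier coefficients
`c(φ_m; n, r)` of `f`, and `cg m n r ∈ Hom(V_ρ, V_σ)` those of `g`; `i^{2k}` is encoded
as `I ^ twok`, `ρ(δ)` as a linear automorphism `A` of `V`, `σ(δ)` as an endomorphism `B`
of `W`, and `τ(δ)(λ) = σ(δ) ∘ λ ∘ ρ(δ)⁻¹`. If `f` and `g` are symmetric, then the
coefficients of `⟨g, f⟩` (given by double convolution) satisfy
`c(⟨g,f⟩_M; n, r) = i^{2(k+k₁)} σ(δ) c(⟨g,f⟩_n; M, r)`. -/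
theorem statement8 {V W : Type*} [AddCommGroup V] [Module ℂ V] [AddCommGroup W] [Module ℂ W]
    [FiniteDimensional ℂ V] [FiniteDimensional ℂ W]
    (twok twok₁ : ℤ) (A : V ≃ₗ[ℂ] V) (B : W →ₗ[ℂ] W)
    (cf : ℕ → ℕ → ℚ → V) (cg : ℕ → ℕ → ℚ → (V →ₗ[ℂ] W))
    (hfin : ∀ m n, (Function.support (cf m n)).Finite)
    (hfin' : ∀ m n, (Function.support (cg m n)).Finite)
    (hsym : ∀ m n r, cf m n r = (Complex.I ^ twok) • (A : V →ₗ[ℂ] V) (cf n m r))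
    (hsym' : ∀ m n r, cg m n r =
      (Complex.I ^ twok₁) • (B ∘ₗ (cg n m r) ∘ₗ (A.symm : V →ₗ[ℂ] V))) :
    ∀ (M n : ℕ) (r : ℚ),
      (∑ p ∈ Finset.HasAntidiagonal.antidiagonal M, ∑ q ∈ Finset.HasAntidiagonal.antidiagonal n,
        ∑ᶠ (s : ℚ × ℚ) (_ : s.1 + s.2 = r), cg p.2 q.2 s.2 (cf p.1 q.1 s.1)) =
      (Complex.I ^ (twok + twok₁)) •
        B (∑ p ∈ Finset.HasAntidiagonal.antidiagonal n, ∑ q ∈ Finset.HasAntidiagonal.antidiagonal M,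
            ∑ᶠ (s : ℚ × ℚ) (_ : s.1 + s.2 = r), cg p.2 q.2 s.2 (cf p.1 q.1 s.1)) := by
  intro M n r
  classical
  set c : ℂ := Complex.I ^ (twok + twok₁) with hc
  have hI : (Complex.I : ℂ) ≠ 0 := Complex.I_ne_zero
  -- the linear map `c • B` as an additive monoid hom
  set L : W →ₗ[ℂ] W := c • B with hL
  have key : ∀ a b a' b' : ℕ,
      (∑ᶠ (s : ℚ × ℚ) (_ : s.1 + s.2 = r), cg b b' s.2 (cf a a' s.1)) =
        c • B (∑ᶠ (s : ℚ × ℚ) (_ : s.1 + s.2 = r), cg b' b s.2 (cf a' a s.1)) := by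
    intro a b a' b'
    have hpt : ∀ s : ℚ × ℚ, cg b b' s.2 (cf a a' s.1)
        = L (cg b' b s.2 (cf a' a s.1)) := by
      intro s
      rw [hsym' b b' s.2, hsym a a' s.1]
      simp only [hL, LinearMap.smul_apply, LinearMap.comp_apply, LinearEquiv.coe_coe,
        map_smul, LinearEquiv.symm_apply_apply, smul_smul]
      congr 1
      rw [hc, zpow_add₀ hI, mul_comm]
    have hfin2 : (Function.support fun s : ℚ × ℚ => cg b' b s.2 (cf a' a s.1)).Finite := by
      refine Set.Finite.subset ((hfin a' a).prod (hfin' b' b)) ?_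
      intro s hs
      constructor
      · intro h0
        apply hs
        simp [Function.mem_support] at hs ⊢
        simp [h0]
      · intro h0
        apply hs
        simp [h0]
    have hfin3 : (Function.support fun s : ℚ × ℚ =>
        ∑ᶠ (_ : s.1 + s.2 = r), cg b' b s.2 (cf a' a s.1)).Finite := by
      refine Set.Finite.subset hfin2 ?_
      intro s hs h0
      apply hs
      simp only [h0, finsum_zero]
    calc (∑ᶠ (s : ℚ × ℚ) (_ : s.1 + s.2 = r), cg b b' s.2 (cf a a' s.1))
        = ∑ᶠ (s : ℚ × ℚ) (_ : s.1 + s.2 = r), L (cg b' b s.2 (cf a' a s.1)) := by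
          exact finsum_congr fun s => finsum_congr fun _ => hpt s
      _ = ∑ᶠ (s : ℚ × ℚ), L (∑ᶠ (_ : s.1 + s.2 = r), cg b' b s.2 (cf a' a s.1)) := by
          refine finsum_congr fun s => ?_
          rw [finsum_eq_if, finsum_eq_if]
          split <;> simp
      _ = L (∑ᶠ (s : ℚ × ℚ) (_ : s.1 + s.2 = r), cg b' b s.2 (cf a' a s.1)) :=
          (L.toAddMonoidHom.map_finsum hfin3).symm
      _ = c • B (∑ᶠ (s : ℚ × ℚ) (_ : s.1 + s.2 = r), cg b' b s.2 (cf a' a s.1)) := rfl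
  calc (∑ p ∈ Finset.HasAntidiagonal.antidiagonal M, ∑ q ∈ Finset.HasAntidiagonal.antidiagonal n,
        ∑ᶠ (s : ℚ × ℚ) (_ : s.1 + s.2 = r), cg p.2 q.2 s.2 (cf p.1 q.1 s.1))
      = ∑ p ∈ Finset.HasAntidiagonal.antidiagonal M, ∑ q ∈ Finset.HasAntidiagonal.antidiagonal n,
          c • B (∑ᶠ (s : ℚ × ℚ) (_ : s.1 + s.2 = r), cg q.2 p.2 s.2 (cf q.1 p.1 s.1)) :=
        Finset.sum_congr rfl fun p _ => Finset.sum_congr rfl fun q _ => key p.1 p.2 q.1 q.2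
    _ = c • B (∑ p ∈ Finset.HasAntidiagonal.antidiagonal M, ∑ q ∈ Finset.HasAntidiagonal.antidiagonal n,
          ∑ᶠ (s : ℚ × ℚ) (_ : s.1 + s.2 = r), cg q.2 p.2 s.2 (cf q.1 p.1 s.1)) := by
        simp [Finset.smul_sum, map_sum]
    _ = c • B (∑ q ∈ Finset.HasAntidiagonal.antidiagonal n, ∑ p ∈ Finset.HasAntidiagonal.antidiagonal M,
          ∑ᶠ (s : ℚ × ℚ) (_ : s.1 + s.2 = r), cg q.2 p.2 s.2 (cf q.1 p.1 s.1)) := by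
        rw [Finset.sum_comm]
end
end
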